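/- Let G = (V,E) be a finite connected simple graph with at least one edge. If μ is a pmf on Γ_G whose edge usage probability η_μ is constant on E, then necessarily η_μ(e) = (|V| − 1)/|E| for every e ∈ E, and μ is MEO-optimal, i.e., its expected overlap equals MEO(Γ_G). -/
import Mathlib


noncomputable section
open scoped Classical
open Finset

variable {V : Type*} [Fintype V] [DecidableEq V]

/-- A pmf on a finite family `Γ` of edge sets. -/
def IsPmf (Γ : Finset (Finset (Sym2 V))) (μ : Finset (Sym2 V) → ℝ) : Prop :=
  (∀ γ, 0 ≤ μ γ) ∧ (∀ γ, γ ∉ Γ → μ γ = 0) ∧ ∑ γ ∈ Γ, μ γ = 1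

/-- Edge usage probability. -/
def eta (Γ : Finset (Finset (Sym2 V))) (μ : Finset (Sym2 V) → ℝ) (e : Sym2 V) : ℝ :=
  ∑ γ ∈ Γ.filter (fun γ => e ∈ γ), μ γ

/-- Expected overlap. -/
def EO (Γ : Finset (Finset (Sym2 V))) (μ : Finset (Sym2 V) → ℝ) : ℝ :=
  ∑ γ ∈ Γ, ∑ γ' ∈ Γ, ((γ ∩ γ').card : ℝ) * μ γ * μ γ'

/-- Minimum expected overlap. -/
def MEO (Γ : Finset (Finset (Sym2 V))) : ℝ :=
  sInf {x : ℝ | ∃ μ, IsPmf Γ μ ∧ x = EO Γ μ}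

/-- The set of spanning trees of `G`, as finsets of edges. -/
def spanningTrees (G : SimpleGraph V) : Finset (Finset (Sym2 V)) :=
  Finset.univ.filter (fun γ => ↑γ ⊆ G.edgeSet ∧
    (SimpleGraph.fromEdgeSet (↑γ : Set (Sym2 V))).Connected ∧
    γ.card = Fintype.card V - 1)

/-- Edges of `G` with both endpoints in `W`. -/
def edgesWithin (G : SimpleGraph V) (W : Finset V) : Finset (Sym2 V) :=
  G.edgeFinset.filter (fun e => ∀ v ∈ e, v ∈ W)

/-- `γ` is a spanning tree of the subgraph of `G` induced by the vertex set `W`. -/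
def IsSpanningTreeOn (G : SimpleGraph V) (W : Finset V) (γ : Finset (Sym2 V)) : Prop :=
  γ ⊆ edgesWithin G W ∧
    ((SimpleGraph.fromEdgeSet (↑γ : Set (Sym2 V))).induce (↑W : Set V)).Connected ∧
    γ.card = W.card - 1

def spanningTreesOn (G : SimpleGraph V) (W : Finset V) : Finset (Finset (Sym2 V)) :=
  Finset.univ.filter (IsSpanningTreeOn G W)

def Adm (Γ : Finset (Finset (Sym2 V))) (ρ : Sym2 V → ℝ) : Prop :=
  (∀ e, 0 ≤ ρ e) ∧ ∀ γ ∈ Γ, 1 ≤ ∑ e ∈ γ, ρ e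

def Mod2 (Eset : Finset (Sym2 V)) (Γ : Finset (Finset (Sym2 V))) : ℝ :=
  sInf {x : ℝ | ∃ ρ, Adm Γ ρ ∧ x = ∑ e ∈ Eset, (ρ e) ^ 2}

/-- A fair spanning tree. -/
def IsFair (G : SimpleGraph V) (γ : Finset (Sym2 V)) : Prop :=
  ∃ μ, IsPmf (spanningTrees G) μ ∧ EO (spanningTrees G) μ = MEO (spanningTrees G) ∧ 0 < μ γ

def IsFeasiblePartition (G : SimpleGraph V) (P : Finset (Finset V)) : Prop :=
  2 ≤ P.card ∧ (∀ p ∈ P, p.Nonempty) ∧ (∀ v : V, ∃! p, p ∈ P ∧ v ∈ p) ∧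
    ∀ p ∈ P, (G.induce (↑p : Set V)).Connected

/-- The edges of `G` joining distinct parts of the partition `P`. -/
def cutEdges (G : SimpleGraph V) (P : Finset (Finset V)) : Finset (Sym2 V) :=
  G.edgeFinset.filter (fun e => ¬ ∃ p ∈ P, ∀ v ∈ e, v ∈ p)

/-- `G` is homogeneous. -/
def IsHomogeneous (G : SimpleGraph V) : Prop :=
  ∃ μ, IsPmf (spanningTrees G) μ ∧
    ∃ c : ℝ, ∀ e ∈ G.edgeFinset, eta (spanningTrees G) μ e = c


section Aux
variable {V : Type*} [Fintype V] [DecidableEq V]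

lemma eta_eq_sum_ite (Γ : Finset (Finset (Sym2 V))) (ν : Finset (Sym2 V) → ℝ) (e : Sym2 V) :
    eta Γ ν e = ∑ γ ∈ Γ, if e ∈ γ then ν γ else 0 := Finset.sum_filter _ _

lemma spanningTrees_subset {G : SimpleGraph V} {γ : Finset (Sym2 V)}
    (h : γ ∈ spanningTrees G) : γ ⊆ G.edgeFinset := by
  have h1 := (Finset.mem_filter.mp h).2.1
  intro e he
  rw [SimpleGraph.mem_edgeFinset]
  exact h1 he

lemma spanningTrees_card {G : SimpleGraph V} {γ : Finset (Sym2 V)}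
    (h : γ ∈ spanningTrees G) : γ.card = Fintype.card V - 1 :=
  (Finset.mem_filter.mp h).2.2.2

lemma eta_nonneg {Γ : Finset (Finset (Sym2 V))} {ν : Finset (Sym2 V) → ℝ}
    (hν : IsPmf Γ ν) (e : Sym2 V) : 0 ≤ eta Γ ν e :=
  Finset.sum_nonneg fun γ _ => hν.1 γ

lemma sum_eta_eq (G : SimpleGraph V) (hG : G.Connected)
    {ν : Finset (Sym2 V) → ℝ} (hν : IsPmf (spanningTrees G) ν) :
    ∑ e ∈ G.edgeFinset, eta (spanningTrees G) ν e = (Fintype.card V : ℝ) - 1 := by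
  have hVpos : 0 < Fintype.card V := @Fintype.card_pos _ _ hG.nonempty
  simp only [eta_eq_sum_ite]
  rw [Finset.sum_comm]
  have : ∀ γ ∈ spanningTrees G,
      (∑ e ∈ G.edgeFinset, if e ∈ γ then ν γ else 0) = ((Fintype.card V : ℝ) - 1) * ν γ := by
    intro γ hγ
    rw [← Finset.sum_filter, Finset.sum_const, Finset.filter_mem_eq_inter,
        Finset.inter_eq_right.mpr (spanningTrees_subset hγ), nsmul_eq_mul,
        spanningTrees_card hγ, Nat.cast_sub hVpos, Nat.cast_one]
  rw [Finset.sum_congr rfl this, ← Finset.mul_sum, hν.2.2, mul_one]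

lemma EO_eq_sum_sq (G : SimpleGraph V) (ν : Finset (Sym2 V) → ℝ) :
    EO (spanningTrees G) ν = ∑ e ∈ G.edgeFinset, (eta (spanningTrees G) ν e) ^ 2 := by
  have key : ∀ γ ∈ spanningTrees G, ∀ γ' ∈ spanningTrees G,
      ((γ ∩ γ').card : ℝ) * ν γ * ν γ'
        = ∑ e ∈ G.edgeFinset, (if e ∈ γ then ν γ else 0) * (if e ∈ γ' then ν γ' else 0) := by
    intro γ hγ γ' hγ'
    have hsub : γ ∩ γ' ⊆ G.edgeFinset :=
      (Finset.inter_subset_left).trans (spanningTrees_subset hγ)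
    have : ∀ e ∈ G.edgeFinset,
        (if e ∈ γ then ν γ else 0) * (if e ∈ γ' then ν γ' else 0)
          = if e ∈ γ ∩ γ' then ν γ * ν γ' else 0 := by
      intro e _
      by_cases h1 : e ∈ γ <;> by_cases h2 : e ∈ γ' <;>
        simp [h1, h2, Finset.mem_inter]
    rw [Finset.sum_congr rfl this, ← Finset.sum_filter, Finset.sum_const,
        Finset.filter_mem_eq_inter, Finset.inter_eq_right.mpr hsub, nsmul_eq_mul, mul_assoc]
  calc EO (spanningTrees G) ν
      = ∑ γ ∈ spanningTrees G, ∑ γ' ∈ spanningTrees G, ∑ e ∈ G.edgeFinset,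
          (if e ∈ γ then ν γ else 0) * (if e ∈ γ' then ν γ' else 0) := by
        refine Finset.sum_congr rfl fun γ hγ => Finset.sum_congr rfl fun γ' hγ' => ?_
        exact key γ hγ γ' hγ'
    _ = ∑ e ∈ G.edgeFinset, ∑ γ ∈ spanningTrees G, ∑ γ' ∈ spanningTrees G,
          (if e ∈ γ then ν γ else 0) * (if e ∈ γ' then ν γ' else 0) := by
        rw [Finset.sum_congr rfl fun γ (_ : γ ∈ spanningTrees G) => Finset.sum_comm,
            Finset.sum_comm]
    _ = ∑ e ∈ G.edgeFinset, (eta (spanningTrees G) ν e) ^ 2 := by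
        refine Finset.sum_congr rfl fun e _ => ?_
        rw [eta_eq_sum_ite, sq, Finset.sum_mul]
        exact Finset.sum_congr rfl fun γ _ => (Finset.mul_sum _ _ _).symm

end Aux

/-- a pmf with constant edge usage probability has
`η_μ ≡ (|V|-1)/|E|` on `E` and is MEO-optimal. -/
theorem constant_usage_pmf_is_optimal
    {V : Type*} [Fintype V] [DecidableEq V]
    (G : SimpleGraph V) (hG : G.Connected) (hE : G.edgeFinset.Nonempty)
    (μ : Finset (Sym2 V) → ℝ) (hμ : IsPmf (spanningTrees G) μ)
    (hconst : ∀ e ∈ G.edgeFinset, ∀ e' ∈ G.edgeFinset,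
      eta (spanningTrees G) μ e = eta (spanningTrees G) μ e') :
    (∀ e ∈ G.edgeFinset,
      eta (spanningTrees G) μ e = ((Fintype.card V : ℝ) - 1) / (G.edgeFinset.card : ℝ)) ∧
    EO (spanningTrees G) μ = MEO (spanningTrees G) := by
  classical
  obtain ⟨e0, he0⟩ := hE
  set c : ℝ := eta (spanningTrees G) μ e0 with hc
  have hconst' : ∀ e ∈ G.edgeFinset, eta (spanningTrees G) μ e = c :=
    fun e he => hconst e he e0 he0
  have hEpos : 0 < (G.edgeFinset.card : ℝ) := by
    exact_mod_cast Finset.card_pos.mpr ⟨e0, he0⟩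
  have hsum : (G.edgeFinset.card : ℝ) * c = (Fintype.card V : ℝ) - 1 := by
    rw [← sum_eta_eq G hG hμ, Finset.sum_congr rfl hconst', Finset.sum_const, nsmul_eq_mul]
  have hcval : c = ((Fintype.card V : ℝ) - 1) / (G.edgeFinset.card : ℝ) := by
    rw [eq_div_iff hEpos.ne', mul_comm]
    exact hsum
  have hEOμ : EO (spanningTrees G) μ
      = ((Fintype.card V : ℝ) - 1) ^ 2 / (G.edgeFinset.card : ℝ) := by
    rw [EO_eq_sum_sq, Finset.sum_congr rfl fun e he => by rw [hconst' e he],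
        Finset.sum_const, nsmul_eq_mul, hcval, div_pow, sq ((G.edgeFinset.card : ℝ)),
        div_mul_eq_div_div]
    rw [mul_comm, div_mul_cancel₀ _ hEpos.ne']
  have hlb : ∀ ν : Finset (Sym2 V) → ℝ, IsPmf (spanningTrees G) ν →
      ((Fintype.card V : ℝ) - 1) ^ 2 / (G.edgeFinset.card : ℝ) ≤ EO (spanningTrees G) ν := by
    intro ν hν
    rw [EO_eq_sum_sq, div_le_iff₀ hEpos]
    have := sq_sum_le_card_mul_sum_sq (s := G.edgeFinset)
      (f := fun e => eta (spanningTrees G) ν e)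
    rw [sum_eta_eq G hG hν] at this
    calc ((Fintype.card V : ℝ) - 1) ^ 2
        ≤ (G.edgeFinset.card : ℝ) * ∑ e ∈ G.edgeFinset, (eta (spanningTrees G) ν e) ^ 2 :=
          this
      _ = (∑ e ∈ G.edgeFinset, (eta (spanningTrees G) ν e) ^ 2) * (G.edgeFinset.card : ℝ) :=
          mul_comm _ _
  refine ⟨fun e he => by rw [hconst' e he, hcval], ?_⟩
  have hmem : EO (spanningTrees G) μ ∈
      {x : ℝ | ∃ ν, IsPmf (spanningTrees G) ν ∧ x = EO (spanningTrees G) ν} :=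
    ⟨μ, hμ, rfl⟩
  have hbdd : ∀ x ∈ {x : ℝ | ∃ ν, IsPmf (spanningTrees G) ν ∧ x = EO (spanningTrees G) ν},
      EO (spanningTrees G) μ ≤ x := by
    rintro x ⟨ν, hν, rfl⟩
    rw [hEOμ]
    exact hlb ν hν
  exact le_antisymm (le_csInf ⟨_, hmem⟩ hbdd) (csInf_le ⟨_, hbdd⟩ hmem)
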